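/- For every i ≥ 1 and all f₁,…,f_i ∈ A, one has f₁·d(f₂·d(⋯ f_{i−1}·d(f_i) ⋯)) = Σ_{φ ∈ Inc(i)} ∏_{j=1}^{i} d^{|φ⁻¹(j)|}(f_j), where |φ⁻¹(j)| is the cardinality of the fiber of φ over j and d^m is the m-th iterate of d (in particular the left-hand side equals f₁ when i = 1). -/

import Mathlib

/-- The nested expression `f₁·d(f₂·d(⋯ f_{i−1}·d(f_i) ⋯))` attached to a list
`[f₁, …, f_i]` (equal to `1` on the empty list, and to `f₁` on a singleton). -/
def nest {A : Type*} [CommRing A] (d : A → A) : List A → A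
  | [] => 1
  | [x] => x
  | x :: y :: l => x * d (nest d (y :: l))

lemma d_prod {A : Type*} [CommRing A] (d : A → A)
    (hleib : ∀ x y : A, d (x * y) = d x * y + x * d y) (hone : d 1 = 0)
    {ι : Type*} [DecidableEq ι] (s : Finset ι) (g : ι → A) :
    d (∏ k ∈ s, g k) = ∑ j ∈ s, ∏ k ∈ s, (if k = j then d (g k) else g k) := by
  induction s using Finset.induction with
  | empty => simpa using hone
  | insert a s ha ih =>
    rw [Finset.prod_insert ha, hleib, ih, Finset.sum_insert ha, Finset.prod_insert ha,
      Finset.mul_sum]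
    congr 1
    · simp only [if_pos rfl]
      congr 1
      exact Finset.prod_congr rfl fun k hk => by rw [if_neg (by rintro rfl; exact ha hk)]
    · refine Finset.sum_congr rfl fun j hj => ?_
      rw [Finset.prod_insert ha, if_neg (by rintro rfl; exact ha hj)]

lemma nest_cons {A : Type*} [CommRing A] (d : A → A) {n : ℕ} (x : A) (g : Fin (n+1) → A) :
    nest d (x :: List.ofFn g) = x * d (nest d (List.ofFn g)) := by
  rw [List.ofFn_succ]; rfl

lemma nest_aux {A : Type*} [CommRing A] (d : A → A)
    (hadd : ∀ x y : A, d (x + y) = d x + d y)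
    (hleib : ∀ x y : A, d (x * y) = d x * y + x * d y) :
    ∀ (n : ℕ) (f : Fin (n+1) → A),
    nest d (List.ofFn f) =
      ∑ φ ∈ Finset.univ.filter
          (fun φ : Fin n → Fin (n+1) => ∀ k : Fin n, (k : ℕ) < (φ k : ℕ)),
        ∏ j : Fin (n+1), d^[(Finset.univ.filter (fun k => φ k = j)).card] (f j) := by
  intro n
  induction n with
  | zero =>
    intro f
    simp [List.ofFn_succ, nest]
  | succ n ih =>
    intro f
    have hone : d 1 = 0 := by
      have := hleib 1 1; simp at this; exact this
    have hds : ∀ {ι : Type} (s : Finset ι) (F : ι → A),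
        d (∑ x ∈ s, F x) = ∑ x ∈ s, d (F x) := fun s F =>
      map_sum (AddMonoidHom.mk' d hadd) F s
    rw [List.ofFn_succ, nest_cons, ih (fun k => f k.succ), hds]
    simp only [d_prod d hleib hone, Finset.mul_sum]
    rw [← Finset.sum_product']
    refine Finset.sum_nbij'
      (fun p : (Fin n → Fin (n+1)) × Fin (n+1) =>
        Fin.cons p.2.succ (fun k => (p.1 k).succ))
      (fun φ : Fin (n+1) → Fin (n+2) =>
        ((fun k : Fin n => (⟨(φ k.succ : ℕ) - 1, by have := (φ k.succ).isLt; omega⟩ : Fin (n+1))),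
          (⟨(φ 0 : ℕ) - 1, by have := (φ 0).isLt; omega⟩ : Fin (n+1))))
      ?_ ?_ ?_ ?_ ?_
    · rintro ⟨φ', j⟩ hp
      simp only [Finset.mem_filter, Finset.mem_univ, true_and]
      intro k
      refine Fin.cases ?_ ?_ k
      · simp
      · intro m
        simp only [Fin.cons_succ, Fin.val_succ]
        have hm : (m : ℕ) < φ' m := by
          simp only [Finset.mem_product, Finset.mem_filter, Finset.mem_univ, true_and] at hp
          exact hp.1 m
        omega
    · intro φ hφ
      simp only [Finset.mem_filter, Finset.mem_univ, true_and] at hφ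
      simp only [Finset.mem_product, Finset.mem_filter, Finset.mem_univ, true_and, and_true]
      intro k
      have := hφ k.succ
      simp only [Fin.val_succ] at this
      show (k : ℕ) < (φ k.succ : ℕ) - 1
      omega
    · rintro ⟨φ', j⟩ hp
      refine Prod.ext ?_ ?_
      · funext k
        ext
        simp [Fin.cons_succ]
      · ext
        simp [Fin.cons_zero]
    · intro φ hφ
      simp only [Finset.mem_filter, Finset.mem_univ, true_and] at hφ
      funext k
      refine Fin.cases ?_ ?_ k
      · have h0 := hφ 0
        simp only [Fin.cons_zero]
        ext
        simp only [Fin.val_succ]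
        omega
      · intro m
        have hm := hφ m.succ
        simp only [Fin.val_succ] at hm
        simp only [Fin.cons_succ]
        ext
        simp only [Fin.val_succ]
        omega
    · rintro ⟨φ', j⟩ hp
      have hc0 : (Finset.univ.filter
          (fun k : Fin (n+1) => (Fin.cons j.succ (fun m => (φ' m).succ) : Fin (n+1) → Fin (n+2)) k = 0)).card = 0 := by
        rw [Finset.card_eq_zero, Finset.filter_eq_empty_iff]
        intro k _
        refine Fin.cases ?_ ?_ k
        · simp [Fin.succ_ne_zero]
        · intro m; simp [Fin.succ_ne_zero]
      beta_reduce
      rw [Fin.prod_univ_succ (f := fun j1 : Fin (n+1+1) =>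
        d^[(Finset.univ.filter (fun k : Fin (n+1) =>
          (Fin.cons j.succ (fun m => (φ' m).succ) : Fin (n+1) → Fin (n+2)) k = j1)).card] (f j1))]
      rw [hc0]
      simp only [Function.iterate_zero_apply]
      congr 1
      refine Finset.prod_congr rfl fun l _ => ?_
      have hc : (Finset.univ.filter
          (fun k : Fin (n+1) => (Fin.cons j.succ (fun m => (φ' m).succ) : Fin (n+1) → Fin (n+2)) k = l.succ)).card
          = (if l = j then 1 else 0) + (Finset.univ.filter (fun k : Fin n => φ' k = l)).card := by
        rw [Finset.card_filter, Fin.sum_univ_succ]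
        simp only [Fin.cons_zero, Fin.cons_succ, Fin.succ_inj, Finset.card_filter]
        congr 1
        simp [eq_comm]
      rw [hc]
      by_cases hlj : l = j
      · simp only [if_pos hlj, add_comm 1, Function.iterate_succ_apply']
      · simp only [if_neg hlj, zero_add]

/-- `f₁·d(f₂·d(⋯ f_{i−1}·d(f_i)⋯)) = Σ_{φ ∈ Inc(i)} ∏_j d^{|φ⁻¹(j)|}(f_j)`,
where `Inc(i)` is the set of maps `φ : {1,…,i−1} → {1,…,i}` with `φ(k) > k`
(modelled on `Fin (i-1) → Fin i` with the strict inequality on values). -/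
theorem nest_eq_sum_inc {A : Type*} [CommRing A] (d : A → A)
    (hadd : ∀ x y : A, d (x + y) = d x + d y)
    (hleib : ∀ x y : A, d (x * y) = d x * y + x * d y)
    (i : ℕ) (hi : 1 ≤ i) (f : Fin i → A) :
    nest d (List.ofFn f) =
      ∑ φ ∈ Finset.univ.filter
          (fun φ : Fin (i - 1) → Fin i => ∀ k : Fin (i - 1), (k : ℕ) < (φ k : ℕ)),
        ∏ j : Fin i, d^[(Finset.univ.filter (fun k => φ k = j)).card] (f j) := by
  obtain ⟨n, rfl⟩ : ∃ n, i = n + 1 := ⟨i - 1, by omega⟩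
  exact nest_aux d hadd hleib n f
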